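/- Let P be a B-subbimodule of F^2(T_B(U)) of PBW type, with P = {x − α(x) − β(x) : x ∈ R}, R = π(P). Then on the subspace (R ⊗_B U) ∩ (U ⊗_B R) of U^{⊗_B 3}: (i) the image of α⊗id − id⊗α lies in R; (ii) α ∘ (α⊗id − id⊗α) = −(β⊗id − id⊗β); (iii) β ∘ (α⊗id − id⊗α) = 0. -/

import Mathlib

/- We model the tensor algebra `T = T_B(U)` over `B` abstractly: `T` is an
ℕ-graded `k`-algebra with `B = 𝒜 0` and `U = 𝒜 1`; products in `T` realize
tensors, so an element of `(R ⊗_B U) ∩ (U ⊗_B R) ⊆ U^{⊗_B 3}` is an element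
of `T` admitting representations `Σ rᵢ·uᵢ = Σ u'ⱼ·r'ⱼ` with `rᵢ, r'ⱼ ∈ R`,
`uᵢ, u'ⱼ ∈ U`, and `(α⊗id − id⊗α)` acts as `Σ α(rᵢ)·uᵢ − Σ u'ⱼ·α(r'ⱼ)`. -/

/-- The `m`-th filtered component of a graded algebra. -/
def filt {k T : Type*} [CommSemiring k] [Ring T] [Algebra k T]
    (𝒜 : ℕ → Submodule k T) (m : ℕ) : Submodule k T :=
  ⨆ i ≤ m, 𝒜 i

/-- The leading homogeneous part of an element of a graded algebra. -/
noncomputable def LH {k T : Type*} [CommSemiring k] [Ring T] [Algebra k T]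
    (𝒜 : ℕ → Submodule k T) [GradedAlgebra 𝒜] (f : T) : T :=
  GradedAlgebra.proj 𝒜 (sSup {i | GradedAlgebra.proj 𝒜 i f ≠ 0}) f

/-- The two-sided ideal generated by a subset, as a `k`-submodule. -/
def twoSidedSpan (k : Type*) {T : Type*} [CommSemiring k] [Ring T] [Algebra k T]
    (P : Set T) : Submodule k T :=
  Submodule.span k {x | ∃ a b : T, ∃ p ∈ P, x = a * p * b}

section Aux

variable {k T : Type*} [Field k] [Ring T] [Algebra k T]
variable (𝒜 : ℕ → Submodule k T) [GradedAlgebra 𝒜]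

lemma proj_mem' (n : ℕ) (x : T) : GradedAlgebra.proj 𝒜 n x ∈ 𝒜 n := by
  rw [GradedAlgebra.proj_apply]; exact SetLike.coe_mem _

lemma proj_of_mem_same' {m : ℕ} {x : T} (h : x ∈ 𝒜 m) : GradedAlgebra.proj 𝒜 m x = x := by
  rw [GradedAlgebra.proj_apply, DirectSum.decompose_of_mem_same 𝒜 h]

lemma proj_of_mem_ne' {m n : ℕ} {x : T} (h : x ∈ 𝒜 m) (hne : m ≠ n) :
    GradedAlgebra.proj 𝒜 n x = 0 := by
  rw [GradedAlgebra.proj_apply, DirectSum.decompose_of_mem_ne 𝒜 h hne]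

lemma proj_mul00_hom {i : ℕ} {a b x : T} (ha : a ∈ 𝒜 0) (hb : b ∈ 𝒜 0) (hx : x ∈ 𝒜 i)
    (n : ℕ) : GradedAlgebra.proj 𝒜 n (a * x * b) = a * GradedAlgebra.proj 𝒜 n x * b := by
  have hm : a * x * b ∈ 𝒜 i := by
    have := SetLike.mul_mem_graded (SetLike.mul_mem_graded ha hx) hb
    simpa using this
  rcases eq_or_ne i n with rfl | hne
  · rw [proj_of_mem_same' 𝒜 hm, proj_of_mem_same' 𝒜 hx]
  · rw [proj_of_mem_ne' 𝒜 hm hne, proj_of_mem_ne' 𝒜 hx hne, mul_zero, zero_mul]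


lemma proj_mul00 {a b : T} (ha : a ∈ 𝒜 0) (hb : b ∈ 𝒜 0) (n : ℕ) (x : T) :
    GradedAlgebra.proj 𝒜 n (a * x * b) = a * GradedAlgebra.proj 𝒜 n x * b := by
  induction x using DirectSum.Decomposition.inductionOn 𝒜 with
  | zero => simp
  | homogeneous m =>
    exact proj_mul00_hom 𝒜 ha hb m.2 n
  | add x y hx hy =>
    rw [mul_add, add_mul, map_add, map_add, mul_add, add_mul, hx, hy]


lemma spanR_struct (P : Submodule k T)
    (hbi : ∀ a ∈ 𝒜 0, ∀ b ∈ 𝒜 0, ∀ x ∈ P, a * x * b ∈ P) :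
    ∀ x ∈ twoSidedSpan k ((GradedAlgebra.proj 𝒜 2 : T →ₗ[k] T) '' (P : Set T)),
      (∀ n, n < 2 → GradedAlgebra.proj 𝒜 n x = 0) ∧
        GradedAlgebra.proj 𝒜 2 x ∈ Submodule.map (GradedAlgebra.proj 𝒜 2) P := by
  intro x hx
  induction hx using Submodule.span_induction with
  | mem x h =>
    obtain ⟨a, b, ρ, ⟨p, hp, rfl⟩, rfl⟩ := h
    -- core: homogeneous a, b
    have core : ∀ (i j : ℕ) (a b : T), a ∈ 𝒜 i → b ∈ 𝒜 j →
        (∀ n, n < 2 → GradedAlgebra.proj 𝒜 n (a * GradedAlgebra.proj 𝒜 2 p * b) = 0) ∧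
          GradedAlgebra.proj 𝒜 2 (a * GradedAlgebra.proj 𝒜 2 p * b) ∈
            Submodule.map (GradedAlgebra.proj 𝒜 2) P := by
      intro i j a b ha hb
      have hρ : GradedAlgebra.proj 𝒜 2 p ∈ 𝒜 2 := proj_mem' 𝒜 2 p
      have hm : a * GradedAlgebra.proj 𝒜 2 p * b ∈ 𝒜 (i + 2 + j) :=
        SetLike.mul_mem_graded (SetLike.mul_mem_graded ha hρ) hb
      constructor
      · intro n hn
        exact proj_of_mem_ne' 𝒜 hm (by omega)
      · rcases eq_or_ne (i + 2 + j) 2 with he | hne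
        · obtain ⟨hi, hj⟩ : i = 0 ∧ j = 0 := by omega
          subst hi; subst hj
          rw [proj_of_mem_same' 𝒜 hm]
          exact ⟨a * p * b, hbi a ha b hb p hp, proj_mul00 𝒜 ha hb 2 p⟩
        · rw [proj_of_mem_ne' 𝒜 hm hne]
          exact Submodule.zero_mem _
    -- induct on b then a
    have stepb : ∀ (b : T), (∀ (a : T),
        (∀ n, n < 2 → GradedAlgebra.proj 𝒜 n (a * GradedAlgebra.proj 𝒜 2 p * b) = 0) ∧
          GradedAlgebra.proj 𝒜 2 (a * GradedAlgebra.proj 𝒜 2 p * b) ∈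
            Submodule.map (GradedAlgebra.proj 𝒜 2) P) := by
      intro b
      induction b using DirectSum.Decomposition.inductionOn 𝒜 with
      | zero => intro a; simp [Submodule.zero_mem]
      | homogeneous m =>
        intro a
        induction a using DirectSum.Decomposition.inductionOn 𝒜 with
        | zero => simp [Submodule.zero_mem]
        | homogeneous m' => exact core _ _ _ _ m'.2 m.2
        | add a a' hA hA' =>
          constructor
          · intro n hn
            rw [add_mul, add_mul, map_add, hA.1 n hn, hA'.1 n hn, add_zero]
          · rw [add_mul, add_mul, map_add]
            exact Submodule.add_mem _ hA.2 hA'.2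
      | add b b' hB hB' =>
        intro a
        constructor
        · intro n hn
          rw [mul_add, map_add, (hB a).1 n hn, (hB' a).1 n hn, add_zero]
        · rw [mul_add, map_add]
          exact Submodule.add_mem _ (hB a).2 (hB' a).2
    exact stepb b a
  | zero => simp [Submodule.zero_mem]
  | add x y hx hy ihx ihy =>
    refine ⟨fun n hn => by rw [map_add, ihx.1 n hn, ihy.1 n hn, add_zero], ?_⟩
    rw [map_add]; exact Submodule.add_mem _ ihx.2 ihy.2
  | smul c x hx ihx =>
    refine ⟨fun n hn => by rw [map_smul, ihx.1 n hn, smul_zero], ?_⟩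
    rw [map_smul]; exact Submodule.smul_mem _ _ ihx.2


lemma exists_top (x : T) (hx : x ≠ 0) (m : ℕ)
    (hb : ∀ n, m < n → GradedAlgebra.proj 𝒜 n x = 0) :
    sSup {i | GradedAlgebra.proj 𝒜 i x ≠ 0} ≤ m ∧
      GradedAlgebra.proj 𝒜 (sSup {i | GradedAlgebra.proj 𝒜 i x ≠ 0}) x ≠ 0 := by
  classical
  set S := {i | GradedAlgebra.proj 𝒜 i x ≠ 0} with hS
  have hne : S.Nonempty := by
    by_contra h
    rw [Set.not_nonempty_iff_eq_empty] at h
    apply hx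
    have hall : ∀ i, GradedAlgebra.proj 𝒜 i x = 0 := by
      intro i
      by_contra hi
      exact (h ▸ hi : i ∈ (∅ : Set ℕ))
    calc x = ∑ i ∈ DFinsupp.support (DirectSum.decompose 𝒜 x),
        ((DirectSum.decompose 𝒜 x) i : T) := (DirectSum.sum_support_decompose 𝒜 x).symm
      _ = 0 := Finset.sum_eq_zero fun i _ => by
          rw [← GradedAlgebra.proj_apply]; exact hall i
  have hbdd : BddAbove S := ⟨m, fun i hi => by
    by_contra hmi
    exact hi (hb i (by omega))⟩
  have hmem : sSup S ∈ S := Nat.sSup_mem hne hbdd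
  refine ⟨?_, hmem⟩
  by_contra hgt
  exact hmem (hb _ (by omega))

lemma LH_mem_spanR (P : Submodule k T)
    (hPBW : twoSidedSpan k ((GradedAlgebra.proj 𝒜 2 : T →ₗ[k] T) '' (P : Set T)) =
      twoSidedSpan k (LH 𝒜 '' (twoSidedSpan k (P : Set T) : Set T)))
    (x : T) (hx : x ∈ twoSidedSpan k (P : Set T)) :
    LH 𝒜 x ∈ twoSidedSpan k ((GradedAlgebra.proj 𝒜 2 : T →ₗ[k] T) '' (P : Set T)) := by
  rw [hPBW]
  exact Submodule.subset_span ⟨1, 1, LH 𝒜 x, ⟨x, hx, rfl⟩, by simp⟩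

lemma low_vanish (P : Submodule k T)
    (hbi : ∀ a ∈ 𝒜 0, ∀ b ∈ 𝒜 0, ∀ x ∈ P, a * x * b ∈ P)
    (hPBW : twoSidedSpan k ((GradedAlgebra.proj 𝒜 2 : T →ₗ[k] T) '' (P : Set T)) =
      twoSidedSpan k (LH 𝒜 '' (twoSidedSpan k (P : Set T) : Set T)))
    (x : T) (hx : x ∈ twoSidedSpan k (P : Set T))
    (h1 : ∀ n, 1 < n → GradedAlgebra.proj 𝒜 n x = 0) : x = 0 := by
  by_contra hne
  obtain ⟨hd, hd0⟩ := exists_top 𝒜 x hne 1 h1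
  set d := sSup {i | GradedAlgebra.proj 𝒜 i x ≠ 0} with hdd
  have hLH : LH 𝒜 x = GradedAlgebra.proj 𝒜 d x := rfl
  have hmem := LH_mem_spanR 𝒜 P hPBW x hx
  have := (spanR_struct 𝒜 P hbi _ hmem).1 d (by omega)
  rw [hLH, proj_of_mem_same' 𝒜 (proj_mem' 𝒜 d x)] at this
  exact hd0 this

lemma span_inter_F2 (P : Submodule k T)
    (hbi : ∀ a ∈ 𝒜 0, ∀ b ∈ 𝒜 0, ∀ x ∈ P, a * x * b ∈ P)
    (hPBW : twoSidedSpan k ((GradedAlgebra.proj 𝒜 2 : T →ₗ[k] T) '' (P : Set T)) =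
      twoSidedSpan k (LH 𝒜 '' (twoSidedSpan k (P : Set T) : Set T)))
    (α β : T →ₗ[k] T)
    (hα : ∀ x ∈ Submodule.map (GradedAlgebra.proj 𝒜 2) P, α x ∈ 𝒜 1)
    (hβ : ∀ x ∈ Submodule.map (GradedAlgebra.proj 𝒜 2) P, β x ∈ 𝒜 0)
    (hPdesc : (P : Set T) =
      {y | ∃ x ∈ Submodule.map (GradedAlgebra.proj 𝒜 2) P, y = x - α x - β x})
    (x : T) (hx : x ∈ twoSidedSpan k (P : Set T))
    (h2 : ∀ n, 2 < n → GradedAlgebra.proj 𝒜 n x = 0) : x ∈ P := by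
  by_cases hx0 : x = 0
  · exact hx0 ▸ P.zero_mem
  obtain ⟨hd, hd0⟩ := exists_top 𝒜 x hx0 2 h2
  set d := sSup {i | GradedAlgebra.proj 𝒜 i x ≠ 0} with hdd
  have hLH : LH 𝒜 x = GradedAlgebra.proj 𝒜 d x := rfl
  have hmem := LH_mem_spanR 𝒜 P hPBW x hx
  have hstruct := spanR_struct 𝒜 P hbi _ hmem
  have hd2 : d = 2 := by
    by_contra hne
    have := hstruct.1 d (by omega)
    rw [hLH, proj_of_mem_same' 𝒜 (proj_mem' 𝒜 d x)] at this
    exact hd0 this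
  set r := GradedAlgebra.proj 𝒜 2 x with hr
  have hrR : r ∈ Submodule.map (GradedAlgebra.proj 𝒜 2) P := by
    have := hstruct.2
    rwa [hLH, hd2, ← hr, proj_of_mem_same' 𝒜 (proj_mem' 𝒜 2 x)] at this
  set p := r - α r - β r with hp
  have hpP : p ∈ P := by
    rw [← SetLike.mem_coe, hPdesc]
    exact ⟨r, hrR, rfl⟩
  have hr2 : r ∈ 𝒜 2 := proj_mem' 𝒜 2 x
  have hxp : x - p ∈ twoSidedSpan k (P : Set T) :=
    sub_mem hx (Submodule.subset_span ⟨1, 1, p, hpP, by simp⟩)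
  have hvan : x - p = 0 := by
    refine low_vanish 𝒜 P hbi hPBW _ hxp fun n hn => ?_
    rw [map_sub, hp, map_sub, map_sub]
    rcases eq_or_ne n 2 with rfl | hne
    · rw [← hr, proj_of_mem_same' 𝒜 hr2, proj_of_mem_ne' 𝒜 (hα r hrR) (by omega),
        proj_of_mem_ne' 𝒜 (hβ r hrR) (by omega)]
      abel
    · rw [h2 n (by omega), proj_of_mem_ne' 𝒜 hr2 (Ne.symm hne),
        proj_of_mem_ne' 𝒜 (hα r hrR) (by omega),
        proj_of_mem_ne' 𝒜 (hβ r hrR) (by omega)]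
      abel
  exact sub_eq_zero.mp hvan ▸ hpP

end Aux

/-- let `P` be a `B`-subbimodule of `F²(T)` of PBW type, with
lower-order-term maps `α : R → U`, `β : R → B` (so
`P = {x − α(x) − β(x) : x ∈ R}`, `R = π(P)`).  Then on
`(R ⊗_B U) ∩ (U ⊗_B R)`:
(i) the image of `α⊗id − id⊗α` lies in `R`;
(ii) `α ∘ (α⊗id − id⊗α) = −(β⊗id − id⊗β)`;
(iii) `β ∘ (α⊗id − id⊗α) = 0`. -/
theorem stmt15 {k T : Type*} [Field k] [Ring T] [Algebra k T]
    (𝒜 : ℕ → Submodule k T) [GradedAlgebra 𝒜]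
    (P : Submodule k T) (hP2 : P ≤ filt 𝒜 2)
    (hbi : ∀ a ∈ 𝒜 0, ∀ b ∈ 𝒜 0, ∀ x ∈ P, a * x * b ∈ P)
    -- `P` is of PBW type: `⟨π(P)⟩ = ⟨LH(⟨P⟩)⟩`
    (hPBW : twoSidedSpan k ((GradedAlgebra.proj 𝒜 2 : T →ₗ[k] T) '' (P : Set T)) =
      twoSidedSpan k (LH 𝒜 '' (twoSidedSpan k (P : Set T) : Set T)))
    -- the maps `α` and `β`, with values in `U = 𝒜 1` and `B = 𝒜 0` on `R`
    (α β : T →ₗ[k] T)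
    (hα : ∀ x ∈ Submodule.map (GradedAlgebra.proj 𝒜 2) P, α x ∈ 𝒜 1)
    (hβ : ∀ x ∈ Submodule.map (GradedAlgebra.proj 𝒜 2) P, β x ∈ 𝒜 0)
    (hαβbi : ∀ a ∈ 𝒜 0, ∀ b ∈ 𝒜 0, ∀ x ∈ Submodule.map (GradedAlgebra.proj 𝒜 2) P,
      α (a * x * b) = a * α x * b ∧ β (a * x * b) = a * β x * b)
    (hPdesc : (P : Set T) =
      {y | ∃ x ∈ Submodule.map (GradedAlgebra.proj 𝒜 2) P, y = x - α x - β x}) :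
    ∀ (n m : ℕ) (r u : Fin n → T) (u' r' : Fin m → T),
      (∀ i, r i ∈ Submodule.map (GradedAlgebra.proj 𝒜 2) P) →
      (∀ i, u i ∈ 𝒜 1) →
      (∀ j, u' j ∈ 𝒜 1) →
      (∀ j, r' j ∈ Submodule.map (GradedAlgebra.proj 𝒜 2) P) →
      (∑ i, r i * u i = ∑ j, u' j * r' j) →
      ((∑ i, α (r i) * u i - ∑ j, u' j * α (r' j)) ∈
          Submodule.map (GradedAlgebra.proj 𝒜 2) P ∧
        α (∑ i, α (r i) * u i - ∑ j, u' j * α (r' j)) =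
          -(∑ i, β (r i) * u i - ∑ j, u' j * β (r' j)) ∧
        β (∑ i, α (r i) * u i - ∑ j, u' j * α (r' j)) = 0) := by
  intro n m r u u' r' hr hu hu' hr' heq
  set A := ∑ i, α (r i) * u i - ∑ j, u' j * α (r' j) with hA
  set Bv := ∑ i, β (r i) * u i - ∑ j, u' j * β (r' j) with hB
  have hA2 : A ∈ 𝒜 2 := by
    refine sub_mem (Submodule.sum_mem _ fun i _ => ?_) (Submodule.sum_mem _ fun j _ => ?_)
    · have := SetLike.mul_mem_graded (hα _ (hr i)) (hu i); norm_num at this; exact this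
    · have := SetLike.mul_mem_graded (hu' j) (hα _ (hr' j)); norm_num at this; exact this
  have hB1 : Bv ∈ 𝒜 1 := by
    refine sub_mem (Submodule.sum_mem _ fun i _ => ?_) (Submodule.sum_mem _ fun j _ => ?_)
    · have := SetLike.mul_mem_graded (hβ _ (hr i)) (hu i); norm_num at this; exact this
    · have := SetLike.mul_mem_graded (hu' j) (hβ _ (hr' j)); norm_num at this; exact this
  set q := ∑ i, (r i - α (r i) - β (r i)) * u i
      - ∑ j, u' j * (r' j - α (r' j) - β (r' j)) with hq
  have hqspan : q ∈ twoSidedSpan k (P : Set T) := by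
    refine sub_mem (Submodule.sum_mem _ fun i _ => ?_) (Submodule.sum_mem _ fun j _ => ?_)
    · refine Submodule.subset_span ⟨1, u i, r i - α (r i) - β (r i), ?_, by rw [one_mul]⟩
      rw [hPdesc]; exact ⟨r i, hr i, rfl⟩
    · refine Submodule.subset_span ⟨u' j, 1, r' j - α (r' j) - β (r' j), ?_, by rw [mul_one]⟩
      rw [hPdesc]; exact ⟨r' j, hr' j, rfl⟩
  have hqval : q = -A - Bv := by
    rw [hq, hA, hB]
    simp only [sub_mul, mul_sub, Finset.sum_sub_distrib]
    rw [heq]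
    abel
  have hq2 : ∀ n, 2 < n → GradedAlgebra.proj 𝒜 n q = 0 := by
    intro n hn
    rw [hqval, map_sub, map_neg, proj_of_mem_ne' 𝒜 hA2 (by omega),
      proj_of_mem_ne' 𝒜 hB1 (by omega), neg_zero, sub_zero]
  have hqP : q ∈ P := span_inter_F2 𝒜 P hbi hPBW α β hα hβ hPdesc q hqspan hq2
  have hqP' := hqP
  rw [← SetLike.mem_coe, hPdesc] at hqP'
  obtain ⟨xq, hxqR, hxq⟩ := hqP'
  have hxq2 : xq ∈ 𝒜 2 := by
    obtain ⟨p0, _, hp0e⟩ := hxqR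
    rw [← hp0e]; exact proj_mem' 𝒜 2 p0
  have hprojq1 : GradedAlgebra.proj 𝒜 2 q = xq := by
    rw [hxq, map_sub, map_sub, proj_of_mem_same' 𝒜 hxq2,
      proj_of_mem_ne' 𝒜 (hα _ hxqR) (by omega), proj_of_mem_ne' 𝒜 (hβ _ hxqR) (by omega),
      sub_zero, sub_zero]
  have hprojq2 : GradedAlgebra.proj 𝒜 2 q = -A := by
    rw [hqval, map_sub, map_neg, proj_of_mem_same' 𝒜 hA2,
      proj_of_mem_ne' 𝒜 hB1 (by omega), sub_zero]
  have hxqeq : xq = -A := by rw [← hprojq1, hprojq2]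
  have hAR : A ∈ Submodule.map (GradedAlgebra.proj 𝒜 2) P := by
    have hneg := Submodule.neg_mem _ hxqR
    rwa [hxqeq, neg_neg] at hneg
  have key : α A + β A = -Bv := by
    have h1 : -A - Bv = xq - α xq - β xq := by rw [← hxq, hqval]
    rw [hxqeq, map_neg, map_neg, sub_neg_eq_add, sub_neg_eq_add, sub_eq_add_neg,
      add_assoc] at h1
    exact (add_left_cancel h1).symm
  have hαA : α A ∈ 𝒜 1 := hα A hAR
  have hβA : β A ∈ 𝒜 0 := hβ A hAR
  have hiii : β A = 0 := by
    have h0 := congrArg (GradedAlgebra.proj 𝒜 0) key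
    rwa [map_add, proj_of_mem_ne' 𝒜 hαA (by omega), proj_of_mem_same' 𝒜 hβA, map_neg,
      proj_of_mem_ne' 𝒜 hB1 (by omega), neg_zero, zero_add] at h0
  have hii : α A = -Bv := by
    have h1 := congrArg (GradedAlgebra.proj 𝒜 1) key
    rwa [map_add, proj_of_mem_same' 𝒜 hαA, proj_of_mem_ne' 𝒜 hβA (by omega), map_neg,
      proj_of_mem_same' 𝒜 hB1, add_zero] at h1
  exact ⟨hAR, hii, hiii⟩
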